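/- Let λ be a (p+1)-centered coloring of a graph G and let H be a subgraph of G of treedepth i ≤ p. Then the vertices of H receive at least i distinct colors under λ. -/

import Mathlib

set_option linter.unusedSectionVars false

/-- Treedepth at most `d`, via an elimination-forest ancestor order. -/
def TreedepthLE {V : Type*} (G : SimpleGraph V) (d : ℕ) : Prop :=
  ∃ lt : V → V → Prop,
    (∀ a b c, lt a b → lt b c → lt a c) ∧
    (∀ a, ¬ lt a a) ∧
    (∀ a b c, lt a c → lt b c → a = b ∨ lt a b ∨ lt b a) ∧
    (∀ ⦃a b⦄, G.Adj a b → lt a b ∨ lt b a) ∧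
    (∀ C : Finset V, (∀ a ∈ C, ∀ b ∈ C, a = b ∨ lt a b ∨ lt b a) → C.card ≤ d)

/-- A coloring `col` of `G` is `q`-centered if every connected induced subgraph
either has a color appearing exactly once, or receives at least `q` colors. -/
def IsCenteredColoring {V C : Type*} [DecidableEq V] [DecidableEq C]
    (G : SimpleGraph V) (col : V → C) (q : ℕ) : Prop :=
  ∀ S : Finset V, (G.induce (↑S : Set V)).Connected →
    (∃ c, (S.filter (fun v => col v = c)).card = 1) ∨ q ≤ (S.image col).card

namespace TdCenteredAux

variable {V : Type*} [DecidableEq V]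

/-- Relative treedepth: `H` restricted to vertex set `A` has treedepth `≤ d`. -/
def TdOn (H : SimpleGraph V) (A : Finset V) (d : ℕ) : Prop :=
  ∃ lt : V → V → Prop,
    (∀ a b c, lt a b → lt b c → lt a c) ∧
    (∀ a, ¬ lt a a) ∧
    (∀ a b c, lt a c → lt b c → a = b ∨ lt a b ∨ lt b a) ∧
    (∀ a ∈ A, ∀ b ∈ A, H.Adj a b → lt a b ∨ lt b a) ∧
    (∀ C : Finset V, C ⊆ A → (∀ a ∈ C, ∀ b ∈ C, a = b ∨ lt a b ∨ lt b a) → C.card ≤ d)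

/-- Reachability within `A`. -/
def Reach (H : SimpleGraph V) (A : Finset V) : V → V → Prop :=
  Relation.ReflTransGen (fun a b => a ∈ A ∧ b ∈ A ∧ H.Adj a b)

lemma reach_symm {H : SimpleGraph V} {A : Finset V} {a b : V} (h : Reach H A a b) :
    Reach H A b a :=
  haveI : Std.Symm (fun a b => a ∈ A ∧ b ∈ A ∧ H.Adj a b) :=
    ⟨fun _ _ h => ⟨h.2.1, h.1, h.2.2.symm⟩⟩
  (Relation.ReflTransGen.symmetric).symm _ _ h

lemma tdOn_empty (H : SimpleGraph V) (d : ℕ) : TdOn H (∅ : Finset V) d := by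
  refine ⟨fun _ _ => False, by tauto, by tauto, by tauto, by simp, ?_⟩
  intro C hC _
  simp [Finset.subset_empty.mp hC]

open Classical in
/-- The component of `v` within `A`. -/
noncomputable def comp (H : SimpleGraph V) (A : Finset V) (v : V) : Finset V :=
  A.filter (fun t => Reach H A v t)

lemma mem_comp {H : SimpleGraph V} {A : Finset V} {v t : V} :
    t ∈ comp H A v ↔ t ∈ A ∧ Reach H A v t := by
  classical
  simp [comp]

lemma comp_eq_of_reach {H : SimpleGraph V} {A : Finset V} {a b : V}
    (h : Reach H A a b) : comp H A a = comp H A b := by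
  ext t
  simp only [mem_comp]
  exact ⟨fun ⟨ht, hr⟩ => ⟨ht, (reach_symm h).trans hr⟩, fun ⟨ht, hr⟩ => ⟨ht, h.trans hr⟩⟩

/-- Gluing component orders. -/
lemma tdOn_glue (H : SimpleGraph V) (A : Finset V) (i : ℕ)
    (h : ∀ v ∈ A, TdOn H (comp H A v) i) : TdOn H A i := by
  classical
  set pick : Finset V → (V → V → Prop) :=
    fun T => if h : TdOn H T i then h.choose else fun _ _ => False with hpick
  have pickspec : ∀ T : Finset V, TdOn H T i →
      (∀ a b c, pick T a b → pick T b c → pick T a c) ∧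
      (∀ a, ¬ pick T a a) ∧
      (∀ a b c, pick T a c → pick T b c → a = b ∨ pick T a b ∨ pick T b a) ∧
      (∀ a ∈ T, ∀ b ∈ T, H.Adj a b → pick T a b ∨ pick T b a) ∧
      (∀ C : Finset V, C ⊆ T → (∀ a ∈ C, ∀ b ∈ C, a = b ∨ pick T a b ∨ pick T b a) →
        C.card ≤ i) := by
    intro T hT
    have : pick T = hT.choose := by simp [hpick, hT]
    rw [this]
    exact hT.choose_spec
  refine ⟨fun a b => a ∈ A ∧ b ∈ A ∧ Reach H A a b ∧ pick (comp H A a) a b,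
    ?_, ?_, ?_, ?_, ?_⟩
  · rintro a b c ⟨ha, hb, hab, pab⟩ ⟨_, hc, hbc, pbc⟩
    have hcomp : comp H A a = comp H A b := comp_eq_of_reach hab
    refine ⟨ha, hc, hab.trans hbc, ?_⟩
    exact (pickspec _ (h a ha)).1 a b c pab (by rwa [hcomp])
  · rintro a ⟨ha, _, _, paa⟩
    exact (pickspec _ (h a ha)).2.1 a paa
  · rintro a b c ⟨ha, hc, hac, pac⟩ ⟨hb, _, hbc, pbc⟩
    have hab : Reach H A a b := hac.trans (reach_symm hbc)
    have hcomp : comp H A a = comp H A b := comp_eq_of_reach hab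
    rcases (pickspec _ (h a ha)).2.2.1 a b c pac (by rwa [hcomp]) with heq | p | p
    · exact Or.inl heq
    · exact Or.inr (Or.inl ⟨ha, hb, hab, p⟩)
    · exact Or.inr (Or.inr ⟨hb, ha, reach_symm hab, by rwa [← hcomp]⟩)
  · intro a ha b hb hadj
    have hab : Reach H A a b := Relation.ReflTransGen.single ⟨ha, hb, hadj⟩
    have haT : a ∈ comp H A a := mem_comp.mpr ⟨ha, Relation.ReflTransGen.refl⟩
    have hbT : b ∈ comp H A a := mem_comp.mpr ⟨hb, hab⟩
    rcases (pickspec _ (h a ha)).2.2.2.1 a haT b hbT hadj with p | p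
    · exact Or.inl ⟨ha, hb, hab, p⟩
    · exact Or.inr ⟨hb, ha, reach_symm hab, by rwa [← comp_eq_of_reach hab]⟩
  · intro Cs hCA hchain
    rcases Cs.eq_empty_or_nonempty with rfl | ⟨x, hx⟩
    · simp
    have hxA : x ∈ A := hCA hx
    have hmem : ∀ a ∈ Cs, a ∈ comp H A x := by
      intro a ha
      rcases hchain x hx a ha with rfl | ⟨_, _, hr, _⟩ | ⟨_, _, hr, _⟩
      · exact mem_comp.mpr ⟨hCA ha, Relation.ReflTransGen.refl⟩
      · exact mem_comp.mpr ⟨hCA ha, hr⟩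
      · exact mem_comp.mpr ⟨hCA ha, reach_symm hr⟩
    refine (pickspec _ (h x hxA)).2.2.2.2 Cs hmem ?_
    intro a ha b hb
    rcases hchain a ha b hb with rfl | ⟨haA, _, hr, p⟩ | ⟨hbA, _, hr, p⟩
    · exact Or.inl rfl
    · have : comp H A a = comp H A x := comp_eq_of_reach
        (reach_symm ((mem_comp.mp (hmem a ha)).2))
      exact Or.inr (Or.inl (by rwa [this] at p))
    · have : comp H A b = comp H A x := comp_eq_of_reach
        (reach_symm ((mem_comp.mp (hmem b hb)).2))
      exact Or.inr (Or.inr (by rwa [this] at p))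

/-- Adding back a vertex as root increases treedepth by at most one. -/
lemma tdOn_of_erase {H : SimpleGraph V} {A : Finset V} {v : V} {i : ℕ}
    (hv : v ∈ A) (h : TdOn H (A.erase v) i) : TdOn H A (i + 1) := by
  obtain ⟨lt, htr, hir, htri, hadj, hch⟩ := h
  set lt0 : V → V → Prop := fun a b => a ∈ A.erase v ∧ b ∈ A.erase v ∧ lt a b with hlt0
  set lt' : V → V → Prop := fun a b => (a = v ∧ b ∈ A ∧ b ≠ v) ∨ lt0 a b with hlt'
  refine ⟨lt', ?_, ?_, ?_, ?_, ?_⟩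
  · rintro a b c (⟨rfl, hb, hbv⟩ | ⟨ha, hb, hab⟩) hbc
    · rcases hbc with ⟨rfl, _, _⟩ | ⟨hb', hc', _⟩
      · exact absurd rfl hbv
      · exact Or.inl ⟨rfl, Finset.mem_of_mem_erase hc', Finset.ne_of_mem_erase hc'⟩
    · rcases hbc with ⟨rfl, _, _⟩ | ⟨hb', hc', hbc'⟩
      · exact absurd (Finset.ne_of_mem_erase hb) (not_not_intro rfl)
      · exact Or.inr ⟨ha, hc', htr a b c hab hbc'⟩
  · rintro a (⟨rfl, _, hav⟩ | ⟨_, _, haa⟩)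
    · exact hav rfl
    · exact hir a haa
  · rintro a b c (⟨rfl, hc, hcv⟩ | ⟨ha, hc, hac⟩) hbc
    · rcases hbc with ⟨rfl, _, _⟩ | ⟨hb', hc', _⟩
      · exact Or.inl rfl
      · exact Or.inr (Or.inl (Or.inl ⟨rfl, Finset.mem_of_mem_erase hb',
          Finset.ne_of_mem_erase hb'⟩))
    · rcases hbc with ⟨rfl, _, _⟩ | ⟨hb', hc', hbc'⟩
      · exact Or.inr (Or.inr (Or.inl ⟨rfl, Finset.mem_of_mem_erase ha,
          Finset.ne_of_mem_erase ha⟩))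
      · rcases htri a b c hac hbc' with rfl | hp | hp
        · exact Or.inl rfl
        · exact Or.inr (Or.inl (Or.inr ⟨ha, hb', hp⟩))
        · exact Or.inr (Or.inr (Or.inr ⟨hb', ha, hp⟩))
  · intro a ha b hb hAdj
    by_cases hav : a = v
    · subst hav
      exact Or.inl (Or.inl ⟨rfl, hb, fun hbv => H.loopless.irrefl a (hbv ▸ hAdj)⟩)
    by_cases hbv : b = v
    · subst hbv
      exact Or.inr (Or.inl ⟨rfl, ha, hav⟩)
    have ha' : a ∈ A.erase v := Finset.mem_erase.mpr ⟨hav, ha⟩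
    have hb' : b ∈ A.erase v := Finset.mem_erase.mpr ⟨hbv, hb⟩
    rcases hadj a ha' b hb' hAdj with hp | hp
    · exact Or.inl (Or.inr ⟨ha', hb', hp⟩)
    · exact Or.inr (Or.inr ⟨hb', ha', hp⟩)
  · intro Cs hCA hchain
    have hsub : Cs.erase v ⊆ A.erase v := fun x hx =>
      Finset.mem_erase.mpr ⟨Finset.ne_of_mem_erase hx, hCA (Finset.mem_of_mem_erase hx)⟩
    have hchain' : ∀ a ∈ Cs.erase v, ∀ b ∈ Cs.erase v, a = b ∨ lt a b ∨ lt b a := by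
      intro a ha b hb
      have hav := Finset.ne_of_mem_erase ha
      have hbv := Finset.ne_of_mem_erase hb
      rcases hchain a (Finset.mem_of_mem_erase ha) b (Finset.mem_of_mem_erase hb) with
        rfl | (⟨rfl, _⟩ | ⟨_, _, hp⟩) | (⟨rfl, _⟩ | ⟨_, _, hp⟩)
      · exact Or.inl rfl
      · exact absurd rfl hav
      · exact Or.inr (Or.inl hp)
      · exact absurd rfl hbv
      · exact Or.inr (Or.inr hp)
    have h1 : (Cs.erase v).card ≤ i := hch _ hsub hchain'
    by_cases hvC : v ∈ Cs
    · have := Finset.card_erase_add_one hvC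
      omega
    · rw [Finset.erase_eq_of_notMem hvC] at h1
      omega

/-- A component within `A` induces a connected subgraph of `G`. -/
lemma comp_connected (G H : SimpleGraph V) (hHG : ∀ a b, H.Adj a b → G.Adj a b)
    {A : Finset V} {v : V} (hv : v ∈ A) :
    (G.induce (↑(comp H A v) : Set V)).Connected := by
  have hvT : v ∈ comp H A v := mem_comp.mpr ⟨hv, Relation.ReflTransGen.refl⟩
  have key : ∀ t, Reach H A v t → ∀ ht : t ∈ comp H A v,
      (G.induce (↑(comp H A v) : Set V)).Reachable
        ⟨v, by exact_mod_cast hvT⟩ ⟨t, by exact_mod_cast ht⟩ := by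
    intro t h
    induction h with
    | refl => intro _; rfl
    | @tail b c h1 h2 ih =>
        intro hc
        have hbT : b ∈ comp H A v := mem_comp.mpr ⟨h2.1, h1⟩
        have hadj : (G.induce (↑(comp H A v) : Set V)).Adj
            ⟨b, by exact_mod_cast hbT⟩ ⟨c, by exact_mod_cast hc⟩ := hHG b c h2.2.2
        exact (ih hbT).trans hadj.reachable
  rw [SimpleGraph.connected_iff]
  refine ⟨?_, ⟨⟨v, by exact_mod_cast hvT⟩⟩⟩
  rintro ⟨a, ha⟩ ⟨b, hb⟩
  have haT : a ∈ comp H A v := by exact_mod_cast ha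
  have hbT : b ∈ comp H A v := by exact_mod_cast hb
  have h1 := key a (mem_comp.mp haT).2 haT
  have h2 := key b (mem_comp.mp hbT).2 hbT
  exact h1.symm.trans h2

/-- The key induction. -/
lemma key {V C : Type*} [DecidableEq V] [DecidableEq C]
    (G : SimpleGraph V) (col : V → C) (p : ℕ)
    (hcc : IsCenteredColoring G col (p + 1)) :
    ∀ i : ℕ, i + 1 ≤ p + 1 → ∀ H : SimpleGraph V, (∀ a b, H.Adj a b → G.Adj a b) →
      ∀ A : Finset V, ¬ TdOn H A i → i + 1 ≤ (A.image col).card := by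
  intro i
  induction i with
  | zero =>
      intro _ H _ A hA
      rcases A.eq_empty_or_nonempty with rfl | hne
      · exact absurd (tdOn_empty H 0) hA
      · simpa [Finset.card_pos] using hne.image col
  | succ i ih =>
      intro hip H hHG A hA
      have hex : ¬ ∀ v ∈ A, TdOn H (comp H A v) (i + 1) := fun h => hA (tdOn_glue H A _ h)
      push_neg at hex
      obtain ⟨v, hv, hT⟩ := hex
      set T := comp H A v with hTdef
      have hTA : T ⊆ A := fun t ht => (mem_comp.mp ht).1
      have himg : T.image col ⊆ A.image col := Finset.image_subset_image hTA
      rcases hcc T (comp_connected G H hHG hv) with ⟨c, hc1⟩ | hbig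
      · obtain ⟨u, hu⟩ := Finset.card_eq_one.mp hc1
        have huf : u ∈ T.filter (fun w => col w = c) := hu ▸ Finset.mem_singleton_self u
        have huT : u ∈ T := (Finset.mem_filter.mp huf).1
        have hucol : col u = c := (Finset.mem_filter.mp huf).2
        have herase : ¬ TdOn H (T.erase u) i := fun h => hT (tdOn_of_erase huT h)
        have hIH : i + 1 ≤ ((T.erase u).image col).card :=
          ih (by omega) H hHG (T.erase u) herase
        have hcnot : c ∉ (T.erase u).image col := by
          intro hc
          obtain ⟨w, hw, hwc⟩ := Finset.mem_image.mp hc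
          have hwu : w ≠ u := Finset.ne_of_mem_erase hw
          have : w ∈ T.filter (fun w => col w = c) :=
            Finset.mem_filter.mpr ⟨Finset.mem_of_mem_erase hw, hwc⟩
          rw [hu, Finset.mem_singleton] at this
          exact hwu this
        have hins : insert c ((T.erase u).image col) ⊆ T.image col := by
          intro x hx
          rcases Finset.mem_insert.mp hx with rfl | hx
          · exact Finset.mem_image.mpr ⟨u, huT, hucol⟩
          · exact Finset.image_subset_image (Finset.erase_subset u T) hx
        have := Finset.card_le_card (hins.trans himg)
        rw [Finset.card_insert_of_notMem hcnot] at this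
        omega
      · exact le_trans (by omega) (le_trans hbig (Finset.card_le_card himg))

end TdCenteredAux

/-- If `col` is a `(p+1)`-centered coloring of `G` and `H` is a subgraph of `G`
(on vertex set `S`) of treedepth exactly `i ≤ p`, then the vertices of `H`
receive at least `i` distinct colors. -/
theorem treedepth_subgraph_many_colors {V C : Type*} [Fintype V]
    [DecidableEq V] [DecidableEq C]
    (G : SimpleGraph V) (col : V → C) (p : ℕ)
    (hcc : IsCenteredColoring G col (p + 1))
    (S : Finset V) (H : SimpleGraph {v : V // v ∈ S})
    (hsub : ∀ a b : {v : V // v ∈ S}, H.Adj a b → G.Adj a b)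
    (i : ℕ) (hip : i ≤ p)
    (htd : TreedepthLE H i) (htd' : ¬ TreedepthLE H (i - 1)) :
    i ≤ (S.image col).card := by
  classical
  rcases Nat.eq_zero_or_pos i with rfl | hi0
  · exact Nat.zero_le _
  obtain ⟨j, rfl⟩ : ∃ j, i = j + 1 := ⟨i - 1, by omega⟩
  set H0 : SimpleGraph V :=
    { Adj := fun u w => ∃ (hu : u ∈ S) (hw : w ∈ S), H.Adj ⟨u, hu⟩ ⟨w, hw⟩
      symm := ⟨by rintro u w ⟨hu, hw, h⟩; exact ⟨hw, hu, h.symm⟩⟩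
      loopless := ⟨by rintro u ⟨hu, hw, h⟩; exact H.loopless.irrefl _ h⟩ } with hH0
  have hH0G : ∀ a b, H0.Adj a b → G.Adj a b := by
    rintro a b ⟨ha, hb, h⟩; exact hsub _ _ h
  have htrans : ¬ TdCenteredAux.TdOn H0 S j := by
    rintro ⟨lt, htr, hir, htri, hadj, hch⟩
    apply htd'
    simp only [Nat.add_sub_cancel]
    refine ⟨fun a b => lt ↑a ↑b, fun a b c => htr _ _ _, fun a => hir _, ?_, ?_, ?_⟩
    · intro a b c h1 h2
      rcases htri (↑a) (↑b) (↑c) h1 h2 with heq | hp | hp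
      · exact Or.inl (Subtype.ext heq)
      · exact Or.inr (Or.inl hp)
      · exact Or.inr (Or.inr hp)
    · intro a b hab
      exact hadj (↑a) a.2 (↑b) b.2 ⟨a.2, b.2, hab⟩
    · intro Cc hchain
      have hsubS : Cc.image (Subtype.val) ⊆ S := by
        intro x hx
        obtain ⟨a, _, rfl⟩ := Finset.mem_image.mp hx
        exact a.2
      have hch' : ∀ a ∈ Cc.image (Subtype.val),
          ∀ b ∈ Cc.image (Subtype.val), a = b ∨ lt a b ∨ lt b a := by
        intro a ha b hb
        obtain ⟨a', ha', rfl⟩ := Finset.mem_image.mp ha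
        obtain ⟨b', hb', rfl⟩ := Finset.mem_image.mp hb
        rcases hchain a' ha' b' hb' with rfl | hp | hp
        · exact Or.inl rfl
        · exact Or.inr (Or.inl hp)
        · exact Or.inr (Or.inr hp)
      have := hch _ hsubS hch'
      rwa [Finset.card_image_of_injective _ Subtype.val_injective] at this
  exact TdCenteredAux.key G col p hcc j (by omega) H0 hH0G S htrans
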